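/- Let d be a natural number that is not a perfect square, a_0 = ⌊√d⌋, (a_n) the partial quotients of √d, and T the minimal period of (a_n)_{n≥1}. Then T is the smallest index k ≥ 1 such that a_k = 2a_0. -/

import Mathlib

/-- The complete quotients of a real number `x`:
`cq x 0 = x` and `cq x (n+1) = 1 / (cq x n - ⌊cq x n⌋)`. -/
noncomputable def cq (x : ℝ) : ℕ → ℝ
  | 0 => x
  | n + 1 => (Int.fract (cq x n))⁻¹

/-- The partial quotients of a real number `x`: `pq x n = ⌊cq x n⌋`. -/
noncomputable def pq (x : ℝ) (n : ℕ) : ℤ := ⌊cq x n⌋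

lemma cq_zero (x : ℝ) : cq x 0 = x := rfl
lemma cq_succ (x : ℝ) (n : ℕ) : cq x (n+1) = (Int.fract (cq x n))⁻¹ := rfl

lemma irr_fract {y : ℝ} (h : Irrational y) : Irrational (Int.fract y) := h.sub_intCast _

lemma cq_irrational {x : ℝ} (hx : Irrational x) : ∀ n, Irrational (cq x n) := by
  intro n
  induction n with
  | zero => exact hx
  | succ n ih => exact (irr_fract ih).inv

lemma fract_cq_ne {x : ℝ} (hx : Irrational x) (n : ℕ) : Int.fract (cq x n) ≠ 0 :=
  (irr_fract (cq_irrational hx n)).ne_zero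

lemma fract_cq_pos {x : ℝ} (hx : Irrational x) (n : ℕ) : 0 < Int.fract (cq x n) :=
  lt_of_le_of_ne (Int.fract_nonneg _) (Ne.symm (fract_cq_ne hx n))

lemma one_lt_cq {x : ℝ} (hx : Irrational x) (n : ℕ) : 1 < cq x (n+1) := by
  rw [cq_succ]
  rw [one_lt_inv_iff₀]
  exact ⟨fract_cq_pos hx n, Int.fract_lt_one _⟩

lemma cq_succ_pos {x : ℝ} (hx : Irrational x) (n : ℕ) : 0 < cq x (n+1) :=
  lt_trans one_pos (one_lt_cq hx n)

lemma fract_cq_eq_inv {x : ℝ} (hx : Irrational x) (n : ℕ) :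
    Int.fract (cq x n) = (cq x (n+1))⁻¹ := by
  rw [cq_succ, inv_inv]

lemma cq_eq_floor_add {x : ℝ} (hx : Irrational x) (n : ℕ) :
    cq x n = pq x n + (cq x (n+1))⁻¹ := by
  rw [← fract_cq_eq_inv hx, pq, Int.floor_add_fract]

lemma one_le_pq {x : ℝ} (hx : Irrational x) (n : ℕ) : 1 ≤ pq x (n+1) := by
  rw [pq, Int.le_floor]
  exact_mod_cast (one_lt_cq hx n).le

lemma cq_key {x y : ℝ} (hx : Irrational x) (hy : Irrational y)
    (h : ∀ n, pq x n = pq y n) (n : ℕ) :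
    cq x n - cq y n = (cq x (n+1))⁻¹ - (cq y (n+1))⁻¹ := by
  rw [cq_eq_floor_add hx n, cq_eq_floor_add hy n, h n]; ring

lemma cq_inj {x y : ℝ} (hx : Irrational x) (hy : Irrational y)
    (h : ∀ n, pq x n = pq y n) : x = y := by
  have bound1 : ∀ n, |cq x n - cq y n| ≤ 1 := by
    intro n
    rw [cq_key hx hy h n, abs_sub_le_iff]
    constructor
    · calc (cq x (n+1))⁻¹ - (cq y (n+1))⁻¹ ≤ (cq x (n+1))⁻¹ := by
            have : 0 < (cq y (n+1))⁻¹ := inv_pos.mpr (cq_succ_pos hy n)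
            linarith
        _ ≤ 1 := by
            rw [inv_le_one_iff₀]; right; exact (one_lt_cq hx n).le
    · calc (cq y (n+1))⁻¹ - (cq x (n+1))⁻¹ ≤ (cq y (n+1))⁻¹ := by
            have : 0 < (cq x (n+1))⁻¹ := inv_pos.mpr (cq_succ_pos hx n)
            linarith
        _ ≤ 1 := by
            rw [inv_le_one_iff₀]; right; exact (one_lt_cq hy n).le
  have prod2 : ∀ z : ℝ, ∀ hz : Irrational z, ∀ n, 2 ≤ cq z (n+1) * cq z (n+2) := by
    intro z hz n
    have e := cq_eq_floor_add hz (n+1)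
    have ha : (1:ℝ) ≤ (pq z (n+1) : ℝ) := by exact_mod_cast one_le_pq hz n
    have h2 : 1 < cq z (n+2) := one_lt_cq hz (n+1)
    have hne : cq z (n+2) ≠ 0 := ne_of_gt (lt_trans one_pos h2)
    have e2 : cq z (n+1) * cq z (n+2) = (pq z (n+1) : ℝ) * cq z (n+2) + 1 := by
      rw [e, add_mul, inv_mul_cancel₀ hne]
    rw [e2]
    have h3 : 1 * cq z (n+2) ≤ (pq z (n+1) : ℝ) * cq z (n+2) :=
      mul_le_mul_of_nonneg_right ha (le_of_lt (lt_trans one_pos h2))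
    linarith
  have step2 : ∀ n, |cq x n - cq y n| ≤ |cq x (n+2) - cq y (n+2)| / 4 := by
    intro n
    have k1 := cq_key hx hy h n
    have k2 := cq_key hx hy h (n+1)
    have hu1 : 0 < cq x (n+1) := cq_succ_pos hx n
    have hv1 : 0 < cq y (n+1) := cq_succ_pos hy n
    have hu2 : 0 < cq x (n+2) := cq_succ_pos hx (n+1)
    have hv2 : 0 < cq y (n+2) := cq_succ_pos hy (n+1)
    have c1 : (cq x (n+1))⁻¹ * cq x (n+1) = 1 := inv_mul_cancel₀ hu1.ne'
    have c2 : (cq y (n+1))⁻¹ * cq y (n+1) = 1 := inv_mul_cancel₀ hv1.ne'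
    have c3 : (cq x (n+2))⁻¹ * cq x (n+2) = 1 := inv_mul_cancel₀ hu2.ne'
    have c4 : (cq y (n+2))⁻¹ * cq y (n+2) = 1 := inv_mul_cancel₀ hv2.ne'
    have e' : (cq x n - cq y n) * (cq x (n+1) * cq y (n+1) * cq x (n+2) * cq y (n+2))
        = cq x (n+2) - cq y (n+2) := by
      rw [k1]
      linear_combination (cq y (n+1) * cq x (n+2) * cq y (n+2)) * c1
        - (cq x (n+1) * cq x (n+2) * cq y (n+2)) * c2
        - (cq x (n+2) * cq y (n+2)) * k2 - cq y (n+2) * c3 + cq x (n+2) * c4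
    have hD : (4:ℝ) ≤ cq x (n+1) * cq y (n+1) * cq x (n+2) * cq y (n+2) := by
      have p1 := prod2 x hx n
      have p2 := prod2 y hy n
      nlinarith
    have habs : |cq x n - cq y n| * (cq x (n+1) * cq y (n+1) * cq x (n+2) * cq y (n+2))
        = |cq x (n+2) - cq y (n+2)| := by
      rw [← abs_of_pos (show (0:ℝ) < cq x (n+1) * cq y (n+1) * cq x (n+2) * cq y (n+2) by positivity),
        ← abs_mul, e']
    rw [le_div_iff₀ (by norm_num : (0:ℝ) < 4)]
    nlinarith [abs_nonneg (cq x n - cq y n)]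
  have main : ∀ m n, |cq x n - cq y n| ≤ (1/4 : ℝ)^m := by
    intro m
    induction m with
    | zero => simpa using bound1
    | succ m ih =>
      intro n
      calc |cq x n - cq y n| ≤ |cq x (n+2) - cq y (n+2)| / 4 := step2 n
        _ ≤ (1/4:ℝ)^m / 4 := by gcongr; exact ih (n+2)
        _ = (1/4:ℝ)^(m+1) := by ring
  by_contra hne
  have hpos : 0 < |x - y| := abs_pos.mpr (sub_ne_zero.mpr hne)
  obtain ⟨m, hm⟩ := exists_pow_lt_of_lt_one hpos (by norm_num : (1/4:ℝ) < 1)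
  exact absurd (main m 0) (not_le.mpr hm)

lemma cq_add (x : ℝ) (m n : ℕ) : cq (cq x m) n = cq x (m + n) := by
  induction n with
  | zero => rfl
  | succ n ih =>
    show (Int.fract (cq (cq x m) n))⁻¹ = (Int.fract (cq x (m + n)))⁻¹
    rw [ih]

lemma cq_period {x : ℝ} {k : ℕ} (h1 : cq x (k+1) = cq x 1) :
    ∀ n, 1 ≤ n → cq x (n+k) = cq x n := by
  intro n hn
  induction n with
  | zero => omega
  | succ n ih =>
    rcases Nat.eq_or_lt_of_le hn with h | h
    · rw [show n + 1 + k = k + 1 by omega, ← h]; exact h1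
    · have := ih (by omega)
      rw [show n + 1 + k = (n + k) + 1 by omega, cq_succ, this, cq_succ]

section main
variable (d : ℕ)

/-- the numerators `m` and denominators `q` of the complete quotients -/
noncomputable def mq : ℕ → ℤ × ℤ
  | 0 => (⌊Real.sqrt d⌋, (d : ℤ) - ⌊Real.sqrt d⌋ ^ 2)
  | n + 1 =>
    let p := mq n
    let m' := pq (Real.sqrt d) (n+1) * p.2 - p.1
    (m', ((d : ℤ) - m' ^ 2) / p.2)

variable {d}

lemma nonsq (hd : ¬ IsSquare d) (m : ℤ) : (d : ℤ) - m ^ 2 ≠ 0 := by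
  intro h
  apply hd
  refine ⟨m.natAbs, ?_⟩
  have : (d : ℤ) = m ^ 2 := by linarith
  have := congrArg Int.natAbs this
  simpa [sq, Int.natAbs_mul] using this

lemma sqrt_irr (hd : ¬ IsSquare d) : Irrational (Real.sqrt d) := irrational_sqrt_natCast_iff.mpr hd

lemma d_pos (hd : ¬ IsSquare d) : 0 < d := by
  rcases Nat.eq_zero_or_pos d with h | h
  · exact absurd (h ▸ ⟨0, rfl⟩) hd
  · exact h

lemma a0_pos (hd : ¬ IsSquare d) : 1 ≤ ⌊Real.sqrt d⌋ := by
  rw [Int.le_floor]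
  push_cast
  rw [show (1:ℝ) = Real.sqrt 1 by simp]
  apply Real.sqrt_le_sqrt
  have h1 : d ≠ 1 := fun h => hd (h ▸ ⟨1, rfl⟩)
  have := d_pos hd
  exact_mod_cast by omega

lemma mq_succ (n : ℕ) : mq d (n+1) =
    (pq (Real.sqrt d) (n+1) * (mq d n).2 - (mq d n).1,
     ((d:ℤ) - (pq (Real.sqrt d) (n+1) * (mq d n).2 - (mq d n).1)^2) / (mq d n).2) := rfl

lemma fract_eq (t : ℝ) : Int.fract t = t - ↑⌊t⌋ := rfl

lemma mq_zero : mq d 0 = (⌊Real.sqrt d⌋, (d : ℤ) - ⌊Real.sqrt d⌋ ^ 2) := rfl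

lemma mq_spec (hd : ¬ IsSquare d) : ∀ n,
    cq (Real.sqrt d) (n+1) * ((mq d n).2 : ℝ) = ((mq d n).1 : ℝ) + Real.sqrt d ∧
    0 < (mq d n).2 ∧
    (mq d n).2 ∣ ((d:ℤ) - (mq d n).1 ^ 2) ∧
    ((mq d n).1 : ℝ) < Real.sqrt d ∧
    Real.sqrt d - ((mq d n).1 : ℝ) < ((mq d n).2 : ℝ) := by
  have hx : Irrational (Real.sqrt d) := sqrt_irr hd
  set x := Real.sqrt d with hxdef
  have hx2 : x ^ 2 = (d : ℝ) := Real.sq_sqrt (Nat.cast_nonneg d)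
  have ha0 : ((⌊x⌋ : ℤ) : ℝ) < x := lt_of_le_of_ne (Int.floor_le x) (Ne.symm (hx.ne_int ⌊x⌋))
  intro n
  induction n with
  | zero =>
    have h0 : (0:ℝ) ≤ ((⌊x⌋:ℤ) : ℝ) := by
      have hxn : (0:ℝ) ≤ x := Real.sqrt_nonneg _
      exact_mod_cast Int.le_floor.mpr (by exact_mod_cast hxn)
    have hsq : ((⌊x⌋:ℤ):ℝ) ^ 2 < ((d:ℕ):ℝ) := by
      rw [← hx2]; exact pow_lt_pow_left₀ ha0 h0 (by norm_num)
    have hq0 : (0:ℤ) < (d:ℤ) - ⌊x⌋ ^ 2 := by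
      have : ((0:ℤ):ℝ) < (((d:ℤ) - ⌊x⌋ ^ 2 : ℤ) : ℝ) := by push_cast; push_cast at hsq; linarith
      exact_mod_cast this
    have hfr : Int.fract x = x - ↑⌊x⌋ := rfl
    rw [mq_zero]
    refine ⟨?_, hq0, dvd_refl _, ha0, ?_⟩
    · show (Int.fract x)⁻¹ * (((d:ℤ) - ⌊x⌋ ^ 2 : ℤ) : ℝ) = ((⌊x⌋:ℤ):ℝ) + x
      rw [hfr, inv_mul_eq_div, div_eq_iff (by linarith : x - ↑⌊x⌋ ≠ 0)]
      push_cast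
      linear_combination -hx2
    · show x - ((⌊x⌋:ℤ):ℝ) < (((d:ℤ) - ⌊x⌋ ^ 2 : ℤ) : ℝ)
      have h1 : x - ↑⌊x⌋ < 1 := by
        have := Int.fract_lt_one x; rwa [hfr] at this
      have h2 : (1:ℝ) ≤ (((d:ℤ) - ⌊x⌋ ^ 2 : ℤ) : ℝ) := by exact_mod_cast hq0
      linarith
  | succ n ih =>
    obtain ⟨h1, hQ, hdvd, hM, hredu⟩ := ih
    set M := (mq d n).1 with hMdef
    set Q := (mq d n).2 with hQdef
    set a := pq x (n+1) with hadef
    set M' : ℤ := a * Q - M with hM'def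
    have hmq : mq d (n+1) = (M', ((d:ℤ) - M'^2) / Q) := mq_succ n
    set Q' : ℤ := ((d:ℤ) - M'^2) / Q with hQ'def
    have hy1 : 1 < cq x (n+1) := one_lt_cq hx n
    have ha1 : 1 ≤ a := one_le_pq hx n
    have ha1r : (1:ℝ) ≤ ((a:ℤ):ℝ) := by exact_mod_cast ha1
    have hfr_pos : 0 < cq x (n+1) - ((a:ℤ):ℝ) := by
      have := fract_cq_pos hx (n+1); rwa [fract_eq] at this
    have hQr : (0:ℝ) < ((Q:ℤ):ℝ) := by exact_mod_cast hQ
    have hQr1 : (1:ℝ) ≤ ((Q:ℤ):ℝ) := by exact_mod_cast hQ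
    have e2 : (cq x (n+1) - ((a:ℤ):ℝ)) * ((Q:ℤ):ℝ) = x - ((M':ℤ):ℝ) := by
      push_cast [hM'def]
      linear_combination h1
    have hxM' : (0:ℝ) < x - ((M':ℤ):ℝ) := by
      rw [← e2]; positivity
    have hM'x : ((M':ℤ):ℝ) < x := by linarith
    have hdvd' : Q ∣ (d:ℤ) - M'^2 := by
      have heq : (d:ℤ) - M'^2 = ((d:ℤ) - M^2) + (2*a*M - a^2*Q)*Q := by
        rw [hM'def]; ring
      rw [heq]
      exact dvd_add hdvd (Dvd.intro_left _ rfl)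
    have hQQ' : Q * Q' = (d:ℤ) - M'^2 := Int.mul_ediv_cancel' hdvd'
    have hlow : ((Q:ℤ):ℝ) - x < ((M':ℤ):ℝ) := by
      have haQ : ((Q:ℤ):ℝ) ≤ ((a:ℤ):ℝ) * ((Q:ℤ):ℝ) := by
        nlinarith [mul_le_mul_of_nonneg_right ha1r hQr.le]
      push_cast [hM'def]
      push_cast at haQ
      linarith
    have hlow2 : -x < ((M':ℤ):ℝ) := by linarith
    have hM'sq : ((M':ℤ):ℝ)^2 < ((d:ℕ):ℝ) := by
      rw [← hx2]
      exact sq_lt_sq' hlow2 hM'x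
    have hdM' : (0:ℤ) < (d:ℤ) - M'^2 := by
      have : ((0:ℤ):ℝ) < (((d:ℤ) - M'^2 : ℤ):ℝ) := by push_cast; push_cast at hM'sq; linarith
      exact_mod_cast this
    have hQ'pos : 0 < Q' := by
      rcases lt_trichotomy Q' 0 with h | h | h
      · nlinarith [hQQ', hdM', hQ]
      · rw [h] at hQQ'; simp at hQQ'; omega
      · exact h
    have hQ'r : (0:ℝ) < ((Q':ℤ):ℝ) := by exact_mod_cast hQ'pos
    have hQQ'r : ((Q:ℤ):ℝ) * ((Q':ℤ):ℝ) = ((d:ℕ):ℝ) - ((M':ℤ):ℝ)^2 := by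
      have h := congrArg (fun z : ℤ => (z:ℝ)) hQQ'
      push_cast at h
      push_cast
      linarith
    have hcq2 : cq x (n+2) = (cq x (n+1) - ((a:ℤ):ℝ))⁻¹ := by
      rw [cq_succ, fract_eq]; rfl
    have key : (((M':ℤ):ℝ) + x) * (cq x (n+1) - ((a:ℤ):ℝ)) = ((Q':ℤ):ℝ) := by
      have hcancel : ((((M':ℤ):ℝ) + x) * (cq x (n+1) - ((a:ℤ):ℝ)) - ((Q':ℤ):ℝ)) * ((Q:ℤ):ℝ) = 0 := by
        linear_combination (((M':ℤ):ℝ) + x) * e2 - hQQ'r + hx2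
      rcases mul_eq_zero.mp hcancel with h | h
      · linarith
      · exact absurd h (ne_of_gt hQr)
    have key2 : ((Q':ℤ):ℝ) * ((Q:ℤ):ℝ) = (x - ((M':ℤ):ℝ)) * (x + ((M':ℤ):ℝ)) := by
      linear_combination hQQ'r - hx2
    rw [hmq]
    refine ⟨?_, hQ'pos, ⟨Q, by rw [← hQQ']; ring⟩, hM'x, ?_⟩
    · show cq x (n+1+1) * ((Q':ℤ):ℝ) = ((M':ℤ):ℝ) + x
      rw [hcq2, inv_mul_eq_div, div_eq_iff (ne_of_gt hfr_pos)]
      linarith [key]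
    · show x - ((M':ℤ):ℝ) < ((Q':ℤ):ℝ)
      have hB : ((Q:ℤ):ℝ) < x + ((M':ℤ):ℝ) := by linarith
      have h5 : (x - ((M':ℤ):ℝ)) * ((Q:ℤ):ℝ) < (x - ((M':ℤ):ℝ)) * (x + ((M':ℤ):ℝ)) :=
        mul_lt_mul_of_pos_left hB hxM'
      rw [← key2] at h5
      exact lt_of_mul_lt_mul_right h5 hQr.le

end main


/-- the minimal period `T` of the partial quotients of `√d`
(periodic from rank 1) is the smallest index `k ≥ 1` with `a_k = 2a_0`. -/
theorem stmt9 (d : ℕ) (hd : ¬ IsSquare d)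
    (T : ℕ) (hT : 1 ≤ T)
    (hper : ∀ n, 1 ≤ n → pq (Real.sqrt d) (n + T) = pq (Real.sqrt d) n)
    (hmin : ∀ T', 1 ≤ T' →
      (∀ n, 1 ≤ n → pq (Real.sqrt d) (n + T') = pq (Real.sqrt d) n) → T ≤ T') :
    pq (Real.sqrt d) T = 2 * pq (Real.sqrt d) 0 ∧
    ∀ k, 1 ≤ k → k < T → pq (Real.sqrt d) k ≠ 2 * pq (Real.sqrt d) 0 := by
  have hx : Irrational (Real.sqrt d) := sqrt_irr hd
  set x := Real.sqrt d with hxdef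
  have hpq0 : pq x 0 = ⌊x⌋ := rfl
  have ha0x : ((⌊x⌋ : ℤ) : ℝ) ≤ x := Int.floor_le x
  have ha0x' : x < ((⌊x⌋ : ℤ) : ℝ) + 1 := Int.lt_floor_add_one x
  have ha0 : 1 ≤ ⌊x⌋ := a0_pos hd
  constructor
  · -- pq x T = 2 * pq x 0
    -- first: cq x (T+1) = cq x 1
    have hinj : cq x (T+1) = cq x 1 := by
      apply cq_inj (cq_irrational hx (T+1)) (cq_irrational hx 1)
      intro n
      have e1 : pq (cq x (T+1)) n = pq x (T+1+n) := by
        unfold pq; rw [cq_add]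
      have e2 : pq (cq x 1) n = pq x (1+n) := by
        unfold pq; rw [cq_add]
      rw [e1, e2, show T+1+n = (1+n)+T by omega]
      exact hper (1+n) (by omega)
    have hfr : Int.fract (cq x T) = Int.fract (cq x 0) := by
      have h1 : (Int.fract (cq x T))⁻¹ = (Int.fract (cq x 0))⁻¹ := hinj
      exact inv_injective h1
    have hcqT : cq x T = ((pq x T : ℤ):ℝ) - ((⌊x⌋:ℤ):ℝ) + x := by
      have := hfr
      rw [fract_eq, fract_eq] at this
      have hc0 : cq x 0 = x := rfl
      rw [hc0] at this
      unfold pq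
      rw [hc0] at *
      linarith
    obtain ⟨h1, hQ, -, hM, hredu⟩ := mq_spec hd (T-1)
    rw [show T-1+1 = T by omega] at h1
    set M := (mq d (T-1)).1
    set Q := (mq d (T-1)).2
    have hQr : (0:ℝ) < ((Q:ℤ):ℝ) := by exact_mod_cast hQ
    -- Q = 1
    have hQ1 : Q = 1 := by
      by_contra hne
      have hQm1 : ((Q:ℤ):ℝ) - 1 ≠ 0 := by
        intro h
        exact hne (by exact_mod_cast (by linarith : ((Q:ℤ):ℝ) = 1))
      apply hx
      refine ⟨((M - (pq x T - ⌊x⌋) * Q : ℤ) : ℚ) / ((Q - 1 : ℤ) : ℚ), ?_⟩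
      push_cast
      rw [div_eq_iff (by push_cast at hQm1 ⊢; exact hQm1)]
      rw [hcqT] at h1
      push_cast at h1 ⊢
      linarith
    have hQ1r : ((Q:ℤ):ℝ) = 1 := by exact_mod_cast hQ1
    have hMr : ((M:ℤ):ℝ) = ((pq x T : ℤ):ℝ) - ((⌊x⌋:ℤ):ℝ) := by
      rw [hcqT] at h1
      rw [hQ1r] at h1
      linarith
    -- M = ⌊x⌋ from reducedness
    have hMa0 : M = ⌊x⌋ := by
      rw [hQ1r] at hredu
      have hxirr : ((M:ℤ):ℝ) < x := hM
      have h2 : ((⌊x⌋:ℤ):ℝ) ≤ ((M:ℤ):ℝ) + 1 - 1 + 1 := by linarith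
      have hle1 : (M:ℤ) ≤ ⌊x⌋ := by
        have : ((M:ℤ):ℝ) < ((⌊x⌋:ℤ):ℝ) + 1 := by linarith
        exact_mod_cast Int.lt_add_one_iff.mp (by exact_mod_cast this)
      have hle2 : ⌊x⌋ ≤ M := by
        have : ((⌊x⌋:ℤ):ℝ) < ((M:ℤ):ℝ) + 1 := by linarith
        exact_mod_cast Int.lt_add_one_iff.mp (by exact_mod_cast this)
      omega
    have : ((pq x T : ℤ):ℝ) = 2 * ((⌊x⌋:ℤ):ℝ) := by
      rw [hMa0] at hMr; linarith
    rw [hpq0]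
    exact_mod_cast this
  · -- minimality
    intro k hk hkT hcontra
    obtain ⟨h1, hQ, -, hM, hredu⟩ := mq_spec hd (k-1)
    rw [show k-1+1 = k by omega] at h1
    set M := (mq d (k-1)).1
    set Q := (mq d (k-1)).2
    have hQr : (0:ℝ) < ((Q:ℤ):ℝ) := by exact_mod_cast hQ
    have ha0r : (1:ℝ) ≤ ((⌊x⌋:ℤ):ℝ) := by exact_mod_cast ha0
    -- floor bound : 2⌊x⌋ ≤ cq x k
    have hfl : ((2 * ⌊x⌋ : ℤ):ℝ) ≤ cq x k := by
      rw [← hpq0, ← hcontra]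
      exact Int.floor_le _
    have hfl' : 2 * ((⌊x⌋:ℤ):ℝ) * ((Q:ℤ):ℝ) ≤ ((M:ℤ):ℝ) + x := by
      rw [← h1]
      push_cast at hfl
      nlinarith
    have hMa0le : ((M:ℤ):ℝ) ≤ ((⌊x⌋:ℤ):ℝ) := by
      have : (M:ℤ) ≤ ⌊x⌋ := by
        have : ((M:ℤ):ℝ) < ((⌊x⌋:ℤ):ℝ) + 1 := by linarith
        exact_mod_cast Int.lt_add_one_iff.mp (by exact_mod_cast this)
      exact_mod_cast this
    have hQ1 : Q = 1 := by
      by_contra hne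
      have hQ2 : (2:ℤ) ≤ Q := by omega
      have hQ2r : (2:ℝ) ≤ ((Q:ℤ):ℝ) := by exact_mod_cast hQ2
      nlinarith
    have hQ1r : ((Q:ℤ):ℝ) = 1 := by exact_mod_cast hQ1
    have hcqk : cq x k = ((M:ℤ):ℝ) + x := by rw [← h1, hQ1r]; ring
    have hfloor : pq x k = M + ⌊x⌋ := by
      unfold pq
      rw [hcqk]
      exact Int.floor_intCast_add M x
    have hMeq : M = ⌊x⌋ := by
      rw [hfloor, hpq0] at hcontra; omega
    have hcq1 : cq x (k+1) = cq x 1 := by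
      rw [cq_succ, cq_succ, hcqk, hMeq]
      have : Int.fract (((⌊x⌋:ℤ):ℝ) + x) = Int.fract (cq x 0) := Int.fract_intCast_add ⌊x⌋ x
      rw [this]
    have hperk : ∀ n, 1 ≤ n → pq x (n + k) = pq x n := by
      intro n hn
      unfold pq
      rw [cq_period hcq1 n hn]
    exact absurd (hmin k hk hperk) (by omega)
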